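/- arXiv:2512.23074 — 4 statements merged into one kernel-verified Lean document; each statement's English description precedes it below -/
import Mathlib

section
/- Let A be an associative algebra with Reynolds–Nijenhuis operator P. Define a new bilinear product a ⋆ b = a·P(b) + P(a)·b − P(a·b). Then (A, ⋆) is an associative algebra. -/
/-- The induced product of a Reynolds–Nijenhuis operator. -/
def rnStar {K : Type*} [Field K] [CharZero K]
    {A : Type*} [NonUnitalRing A] [Module K A] [SMulCommClass K A A] [IsScalarTower K A A]
    (P : A →ₗ[K] A) (a b : A) : A :=
  a * P b + P a * b - P (a * b)

theorem rnStar_assoc {K : Type*} [Field K] [CharZero K]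
    {A : Type*} [NonUnitalRing A] [Module K A] [SMulCommClass K A A] [IsScalarTower K A A]
    (P : A →ₗ[K] A)
    (hN : ∀ a b : A, P a * P b = P (P a * b + a * P b - P (a * b)))
    (hR : ∀ a b : A, P a * P b = P (a * P b + P a * b - P a * P b)) :
    ∀ a b c : A, rnStar P (rnStar P a b) c = rnStar P a (rnStar P b c) := by
  intro a b c
  have e1 : P (a * P b + P a * b - P (a * b)) = P a * P b := by
    rw [add_comm (a * P b) (P a * b)]; exact (hN a b).symm
  have e2 : P (b * P c + P b * c - P (b * c)) = P b * P c := by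
    rw [add_comm (b * P c) (P b * c)]; exact (hN b c).symm
  have h3 := hN (a * b) c
  have h4 := hN a (b * c)
  simp only [rnStar, e1, e2]
  simp only [map_add, map_sub, mul_add, add_mul, mul_sub, sub_mul, mul_assoc] at *
  rw [h3, h4]
  abel
end

section
/- Let A be an associative algebra with Reynolds–Nijenhuis operator P, and let ⋆ be the induced product a ⋆ b = a·P(b) + P(a)·b − P(a·b). Then P is also a Reynolds–Nijenhuis operator on (A, ⋆); in particular P satisfies both the Nijenhuis identity P(a) ⋆ P(b) = P(P(a) ⋆ b + a ⋆ P(b) − P(a ⋆ b)) and the Reynolds identity P(a) ⋆ P(b) = P(a ⋆ P(b) + P(a) ⋆ b − P(a) ⋆ P(b)) with respect to ⋆. -/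
theorem rn_operator_on_star {K : Type*} [Field K] [CharZero K]
    {A : Type*} [NonUnitalRing A] [Module K A] [SMulCommClass K A A] [IsScalarTower K A A]
    (P : A →ₗ[K] A)
    (hN : ∀ a b : A, P a * P b = P (P a * b + a * P b - P (a * b)))
    (hR : ∀ a b : A, P a * P b = P (a * P b + P a * b - P a * P b)) :
    (∀ a b : A, rnStar P (P a) (P b)
        = P (rnStar P (P a) b + rnStar P a (P b) - P (rnStar P a b))) ∧
    (∀ a b : A, rnStar P (P a) (P b)
        = P (rnStar P a (P b) + rnStar P (P a) b - rnStar P (P a) (P b))) := by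
  -- P of the star product is the product of the images
  have S : ∀ x y : A, P (rnStar P x y) = P x * P y := by
    intro x y
    rw [rnStar, hN x y, add_comm (x * P y) (P x * y)]
  -- Combining the two identities: P(P(xy)) = P(Px·Py)
  have Kk : ∀ x y : A, P (P (x * y)) = P (P x * P y) := by
    intro x y
    have h := (hN x y).symm.trans (hR x y)
    simp only [map_add, map_sub] at h
    rw [add_comm (P (x * P y)) (P (P x * y))] at h
    exact sub_right_injective h
  -- The key identity: P(Pa·Pb) = P(Pa)·P(Pb)
  have M : ∀ a b : A, P (P a * P b) = P (P a) * P (P b) := by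
    intro a b
    have h1 := hR a b
    have h2 := congrArg P h1
    simp only [map_add, map_sub] at h2
    rw [Kk a (P b), Kk (P a) b, Kk (P a) (P b)] at h2
    have h3 := hR (P a) (P b)
    simp only [map_add, map_sub] at h3
    exact h2.trans h3.symm
  constructor
  · intro a b
    rw [map_sub, map_add, S (P a) b, S a (P b), S a b, M a b, rnStar, M a b]
    abel
  · intro a b
    rw [map_sub, map_add, S a (P b), S (P a) b, S (P a) (P b), rnStar, M a b]
end

section
/- Let A be an associative algebra and P : A → A a linear involution, P² = Id. If P is a Reynolds–Nijenhuis operator, then P is a modified Rota–Baxter operator of weight −1, i.e., P(a·b) = P(a)·b + a·P(b) − a·b for all a, b ∈ A. -/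
theorem rn_involution_modified_rotaBaxter_neg_one {K : Type*} [Field K] [CharZero K]
    {A : Type*} [NonUnitalRing A] [Module K A] [SMulCommClass K A A] [IsScalarTower K A A]
    (P : A →ₗ[K] A) (hP2 : ∀ a : A, P (P a) = a)
    (hN : ∀ a b : A, P a * P b = P (P a * b + a * P b - P (a * b)))
    (hR : ∀ a b : A, P a * P b = P (a * P b + P a * b - P a * P b)) :
    ∀ a b : A, P (a * b) = P a * b + a * P b - a * b := by
  intro a b
  have h := congrArg P ((hN a b).symm.trans (hR a b))
  rw [hP2, hP2, add_comm (P a * b)] at h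
  have key : P (a * b) = P a * P b := sub_right_injective h
  have h2 := congrArg P (hN a b)
  rw [hP2, ← key, hP2] at h2
  -- h2 : a * b = P a * b + a * P b - P (a * b)
  rw [eq_sub_iff_add_eq] at h2 ⊢
  rw [add_comm] at h2
  exact h2
end

section
/- Let (A, P) be a Reynolds–Nijenhuis associative algebra with representation (V, l, r, ξ), where ξ∘l(a) = l(P(a))∘ξ corresponds to the intertwining condition. Define new actions l'(a)v = l(a)(ξv) − ξ(l(a)v) + l(P(a))v and r'(a)v = r(a)(ξv) − ξ(r(a)v) + r(P(a))v. Then ξ∘l'(a) = l'(P(a))∘ξ and ξ∘r'(a) = r'(P(a))∘ξ for all a ∈ A. -/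
theorem rn_induced_actions_intertwine {K : Type*} [Field K] [CharZero K]
    {A : Type*} [NonUnitalRing A] [Module K A] [SMulCommClass K A A] [IsScalarTower K A A]
    {V : Type*} [AddCommGroup V] [Module K V]
    (P : A →ₗ[K] A)
    (hN : ∀ a b : A, P a * P b = P (P a * b + a * P b - P (a * b)))
    (hR : ∀ a b : A, P a * P b = P (a * P b + P a * b - P a * P b))
    (l r : A →ₗ[K] Module.End K V)
    (hl : ∀ a b : A, l (a * b) = l a * l b)
    (hr : ∀ a b : A, r (a * b) = r b * r a)
    (hlr : ∀ a b : A, l a * r b = r b * l a)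
    (ξ : Module.End K V)
    (hξl : ∀ a : A, ξ * l a = l (P a) * ξ)
    (hξr : ∀ a : A, ξ * r a = r (P a) * ξ)
    (hlP : ∀ a b : A, l (P a) * l b = l a * l (P b))
    (hrP : ∀ a b : A, r (P a) * r b = r b * r (P a)) :
    (∀ a : A, ξ * (l a * ξ - ξ * l a + l (P a))
        = (l (P a) * ξ - ξ * l (P a) + l (P (P a))) * ξ) ∧
    (∀ a : A, ξ * (r a * ξ - ξ * r a + r (P a))
        = (r (P a) * ξ - ξ * r (P a) + r (P (P a))) * ξ) := by
  constructor
  · intro a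
    calc ξ * (l a * ξ - ξ * l a + l (P a))
        = ξ * l a * ξ - ξ * (ξ * l a) + ξ * l (P a) := by noncomm_ring
      _ = l (P a) * ξ * ξ - ξ * l (P a) * ξ + l (P (P a)) * ξ := by
          rw [hξl a, ← mul_assoc, hξl (P a)]
      _ = (l (P a) * ξ - ξ * l (P a) + l (P (P a))) * ξ := by noncomm_ring
  · intro a
    calc ξ * (r a * ξ - ξ * r a + r (P a))
        = ξ * r a * ξ - ξ * (ξ * r a) + ξ * r (P a) := by noncomm_ring
      _ = r (P a) * ξ * ξ - ξ * r (P a) * ξ + r (P (P a)) * ξ := by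
          rw [hξr a, ← mul_assoc, hξr (P a)]
      _ = (r (P a) * ξ - ξ * r (P a) + r (P (P a))) * ξ := by noncomm_ring
end
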